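/- Let R > 0 and k ∈ ℕ₀ and fix either sign ±. There exist constants c, C > 0, depending only on R and k, such that for all f ∈ C^∞([−R,R]): c ‖f‖_{H^k(𝔹_R)} ≤ ∑_{j=0}^{k} ‖D_±^j f‖_{L²(𝔹_R, h_±')} ≤ C ‖f‖_{H^k(𝔹_R)}. -/

import Mathlib

open Real MeasureTheory

/-- The height function `h(y) = √(2 + y²) − 2`. -/
noncomputable def hfun (y : ℝ) : ℝ := Real.sqrt (2 + y ^ 2) - 2

/-- The vector field `D_± f(y) = f'(y)/(1 ± h'(y))`; the sign is encoded by `σ ∈ {1, −1}`. -/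
noncomputable def Dop (σ : ℝ) (f : ℝ → ℝ) : ℝ → ℝ :=
  fun y => deriv f y / (1 + σ * deriv hfun y)

/-- The Sobolev norm `‖f‖_{H^k(𝔹_R)} = ∑_{j=0}^k ‖f^{(j)}‖_{L²(−R,R)}`. -/
noncomputable def sob1 (R : ℝ) (k : ℕ) (f : ℝ → ℝ) : ℝ :=
  ∑ j ∈ Finset.range (k + 1),
    Real.sqrt (∫ x in Set.Ioo (-R) R, (iteratedDeriv j f x) ^ 2)

/-- The weighted `L²(𝔹_R, h_±')` norm. -/
noncomputable def wL2 (R σ : ℝ) (f : ℝ → ℝ) : ℝ :=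
  Real.sqrt (∫ y in Set.Ioo (-R) R, (f y) ^ 2 * (1 + σ * deriv hfun y))

noncomputable def Wt (σ : ℝ) (y : ℝ) : ℝ := 1 + σ * deriv hfun y

lemma two_add_sq_pos (y : ℝ) : 0 < 2 + y ^ 2 := by positivity

lemma sqrt2_pos (y : ℝ) : 0 < Real.sqrt (2 + y ^ 2) := Real.sqrt_pos.2 (two_add_sq_pos y)

lemma hasDerivAt_hfun (y : ℝ) : HasDerivAt hfun (y / Real.sqrt (2 + y ^ 2)) y := by
  have h1 : HasDerivAt (fun y : ℝ => 2 + y ^ 2) (2 * y) y := by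
    simpa using ((hasDerivAt_pow 2 y).const_add 2)
  have h2 := (Real.hasDerivAt_sqrt (two_add_sq_pos y).ne').comp y h1
  have h3 : HasDerivAt (fun y : ℝ => Real.sqrt (2 + y ^ 2) - 2)
      (1 / (2 * Real.sqrt (2 + y ^ 2)) * (2 * y)) y := h2.sub_const 2
  convert h3 using 1
  · rfl
  · field_simp

lemma deriv_hfun (y : ℝ) : deriv hfun y = y / Real.sqrt (2 + y ^ 2) :=
  (hasDerivAt_hfun y).deriv

lemma abs_deriv_hfun_lt (y : ℝ) : |deriv hfun y| < 1 := by
  rw [deriv_hfun, abs_div, abs_of_pos (sqrt2_pos y), div_lt_one (sqrt2_pos y)]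
  have : |y| = Real.sqrt (y ^ 2) := by
    rw [Real.sqrt_sq_eq_abs]
  rw [this]
  exact Real.sqrt_lt_sqrt (by positivity) (by linarith)

lemma Wt_pos (σ : ℝ) (hσ : σ = 1 ∨ σ = -1) (y : ℝ) : 0 < Wt σ y := by
  have h := abs_deriv_hfun_lt y
  have h1 := abs_le.1 h.le
  rcases hσ with rfl | rfl <;> unfold Wt <;>
    rcases abs_lt.1 h with ⟨hl, hr⟩ <;> nlinarith

lemma Wt_le_two (σ : ℝ) (hσ : σ = 1 ∨ σ = -1) (y : ℝ) : Wt σ y ≤ 2 := by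
  rcases abs_lt.1 (abs_deriv_hfun_lt y) with ⟨hl, hr⟩
  rcases hσ with rfl | rfl <;> unfold Wt <;> nlinarith

lemma contDiff_sqrt2 : ContDiff ℝ (⊤ : ℕ∞) (fun y : ℝ => Real.sqrt (2 + y ^ 2)) := by
  rw [contDiff_iff_contDiffAt]
  intro y
  exact (Real.contDiffAt_sqrt (two_add_sq_pos y).ne').comp y
    ((contDiff_const.add (contDiff_id.pow 2)).contDiffAt)

lemma contDiff_Wt (σ : ℝ) : ContDiff ℝ (⊤ : ℕ∞) (Wt σ) := by
  have : Wt σ = fun y => 1 + σ * (y / Real.sqrt (2 + y ^ 2)) := by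
    funext y; rw [Wt, deriv_hfun]
  rw [this]
  exact contDiff_const.add (contDiff_const.mul
    (contDiff_id.div contDiff_sqrt2 (fun y => (sqrt2_pos y).ne')))

lemma contDiff_invWt (σ : ℝ) (hσ : σ = 1 ∨ σ = -1) :
    ContDiff ℝ (⊤ : ℕ∞) (fun y => (Wt σ y)⁻¹) :=
  (contDiff_Wt σ).inv (fun y => (Wt_pos σ hσ y).ne')

lemma Dop_eq (σ : ℝ) (f : ℝ → ℝ) (y : ℝ) : Dop σ f y = deriv f y * (Wt σ y)⁻¹ := by
  rw [Dop, Wt, div_eq_mul_inv]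

lemma smooth_iteratedDeriv (n : ℕ) {f : ℝ → ℝ} (h : ContDiff ℝ (⊤ : ℕ∞) f) :
    ContDiff ℝ (⊤ : ℕ∞) (iteratedDeriv n f) := by
  rw [iteratedDeriv_eq_iterate]; exact h.iterate_deriv n

lemma smooth_deriv {f : ℝ → ℝ} (h : ContDiff ℝ (⊤ : ℕ∞) f) :
    ContDiff ℝ (⊤ : ℕ∞) (deriv f) := (contDiff_infty_iff_deriv.1 h).2

/-- Representation of `(Dop σ)^[j] f` as a combination of iterated derivatives
with smooth coefficients. -/
lemma repA (σ : ℝ) (hσ : σ = 1 ∨ σ = -1) (j : ℕ) :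
    ∃ c : ℕ → ℝ → ℝ, (∀ i, ContDiff ℝ (⊤ : ℕ∞) (c i)) ∧
      (∀ i, j < i → c i = fun _ => 0) ∧
      ∀ f : ℝ → ℝ, ContDiff ℝ (⊤ : ℕ∞) f → ∀ y,
        (Dop σ)^[j] f y = ∑ i ∈ Finset.range (j + 1), c i y * iteratedDeriv i f y := by
  induction j with
  | zero =>
    refine ⟨fun i => if i = 0 then (fun _ => 1) else (fun _ => 0), ?_, ?_, ?_⟩
    · intro i; by_cases hi : i = 0 <;> simp [hi] <;> exact contDiff_const
    · intro i hi
      have : i ≠ 0 := by omega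
      simp [this]
    · intro f hf y; simp [iteratedDeriv_zero]
  | succ j ih =>
    obtain ⟨c, hsm, hvan, hrep⟩ := ih
    refine ⟨fun i y => (deriv (c i) y + (if i = 0 then 0 else c (i - 1) y)) * (Wt σ y)⁻¹,
      ?_, ?_, ?_⟩
    · intro i
      by_cases hi : i = 0
      · simp only [hi, if_pos]
        exact ((smooth_deriv (hsm 0)).add contDiff_const).mul (contDiff_invWt σ hσ)
      · simp only [hi, if_neg, ite_false]
        exact ((smooth_deriv (hsm i)).add (hsm (i - 1))).mul (contDiff_invWt σ hσ)
    · intro i hi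
      have h1 : c i = fun _ => 0 := hvan i (by omega)
      have h2 : c (i - 1) = fun _ => 0 := hvan (i - 1) (by omega)
      funext y
      have hi0 : i ≠ 0 := by omega
      simp [h1, h2, hi0]
    · intro f hf y
      -- the previous iterate as a function
      have hDj : (Dop σ)^[j] f = fun y =>
          ∑ i ∈ Finset.range (j + 1), c i y * iteratedDeriv i f y := funext (hrep f hf)
      have hder : ∀ y, HasDerivAt ((Dop σ)^[j] f)
          (∑ i ∈ Finset.range (j + 1),
            (deriv (c i) y * iteratedDeriv i f y + c i y * iteratedDeriv (i + 1) f y)) y := by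
        intro z
        rw [hDj]
        apply HasDerivAt.fun_sum
        intro i _
        have h1 : HasDerivAt (c i) (deriv (c i) z) z :=
          ((hsm i).differentiable (by norm_num) z).hasDerivAt
        have h2 : HasDerivAt (iteratedDeriv i f) (iteratedDeriv (i + 1) f z) z := by
          rw [iteratedDeriv_succ]
          exact ((smooth_iteratedDeriv i hf).differentiable (by norm_num) z).hasDerivAt
        exact h1.mul h2
      rw [Function.iterate_succ_apply', Dop_eq]
      rw [(hder y).deriv]
      -- now algebra on sums
      have hsplit : ∑ i ∈ Finset.range (j + 2),
          ((deriv (c i) y + (if i = 0 then 0 else c (i - 1) y)) * (Wt σ y)⁻¹) *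
            iteratedDeriv i f y
          = (∑ i ∈ Finset.range (j + 2), deriv (c i) y * iteratedDeriv i f y
            + ∑ i ∈ Finset.range (j + 2),
                (if i = 0 then 0 else c (i - 1) y) * iteratedDeriv i f y) * (Wt σ y)⁻¹ := by
        rw [← Finset.sum_add_distrib, Finset.sum_mul]
        congr 1; funext i; ring
      rw [hsplit]
      congr 1
      have e1 : ∑ i ∈ Finset.range (j + 2), deriv (c i) y * iteratedDeriv i f y
          = ∑ i ∈ Finset.range (j + 1), deriv (c i) y * iteratedDeriv i f y := by
        rw [Finset.sum_range_succ]
        have : c (j + 1) = fun _ => 0 := hvan (j + 1) (by omega)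
        simp [this]
      have e2 : ∑ i ∈ Finset.range (j + 2),
          (if i = 0 then 0 else c (i - 1) y) * iteratedDeriv i f y
          = ∑ i ∈ Finset.range (j + 1), c i y * iteratedDeriv (i + 1) f y := by
        rw [Finset.sum_range_succ']
        simp
      rw [e1, e2, ← Finset.sum_add_distrib]

lemma iter_smooth (σ : ℝ) (hσ : σ = 1 ∨ σ = -1) (j : ℕ) {f : ℝ → ℝ}
    (hf : ContDiff ℝ (⊤ : ℕ∞) f) : ContDiff ℝ (⊤ : ℕ∞) ((Dop σ)^[j] f) := by
  obtain ⟨c, hsm, _, hrep⟩ := repA σ hσ j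
  have : (Dop σ)^[j] f = fun y =>
      ∑ i ∈ Finset.range (j + 1), c i y * iteratedDeriv i f y := funext (hrep f hf)
  rw [this]
  exact ContDiff.sum fun i _ => (hsm i).mul (smooth_iteratedDeriv i hf)

lemma deriv_iter (σ : ℝ) (hσ : σ = 1 ∨ σ = -1) (i : ℕ) {f : ℝ → ℝ}
    (hf : ContDiff ℝ (⊤ : ℕ∞) f) (y : ℝ) :
    deriv ((Dop σ)^[i] f) y = (Dop σ)^[i + 1] f y * Wt σ y := by
  have h : (Dop σ)^[i + 1] f y = deriv ((Dop σ)^[i] f) y / Wt σ y := by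
    rw [Function.iterate_succ_apply', Dop, Wt]
  rw [h, div_mul_cancel₀]
  exact (Wt_pos σ hσ y).ne'

/-- Representation of iterated derivatives in terms of `Dop` iterates. -/
lemma repB (σ : ℝ) (hσ : σ = 1 ∨ σ = -1) (j : ℕ) :
    ∃ d : ℕ → ℝ → ℝ, (∀ i, ContDiff ℝ (⊤ : ℕ∞) (d i)) ∧
      (∀ i, j < i → d i = fun _ => 0) ∧
      ∀ f : ℝ → ℝ, ContDiff ℝ (⊤ : ℕ∞) f → ∀ y,
        iteratedDeriv j f y = ∑ i ∈ Finset.range (j + 1), d i y * (Dop σ)^[i] f y := by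
  induction j with
  | zero =>
    refine ⟨fun i => if i = 0 then (fun _ => 1) else (fun _ => 0), ?_, ?_, ?_⟩
    · intro i; by_cases hi : i = 0 <;> simp [hi] <;> exact contDiff_const
    · intro i hi
      have : i ≠ 0 := by omega
      simp [this]
    · intro f hf y; simp [iteratedDeriv_zero]
  | succ j ih =>
    obtain ⟨d, hsm, hvan, hrep⟩ := ih
    refine ⟨fun i y => deriv (d i) y + (if i = 0 then 0 else d (i - 1) y * Wt σ y),
      ?_, ?_, ?_⟩
    · intro i
      by_cases hi : i = 0
      · simp only [hi, if_pos]
        exact (smooth_deriv (hsm 0)).add contDiff_const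
      · simp only [hi, if_neg, ite_false]
        exact (smooth_deriv (hsm i)).add ((hsm (i - 1)).mul (contDiff_Wt σ))
    · intro i hi
      have h1 : d i = fun _ => 0 := hvan i (by omega)
      have h2 : d (i - 1) = fun _ => 0 := hvan (i - 1) (by omega)
      funext y
      have hi0 : i ≠ 0 := by omega
      simp [h1, h2, hi0]
    · intro f hf y
      have hDj : iteratedDeriv j f = fun y =>
          ∑ i ∈ Finset.range (j + 1), d i y * (Dop σ)^[i] f y := funext (hrep f hf)
      have hder : HasDerivAt (iteratedDeriv j f)
          (∑ i ∈ Finset.range (j + 1),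
            (deriv (d i) y * (Dop σ)^[i] f y
              + d i y * ((Dop σ)^[i + 1] f y * Wt σ y))) y := by
        rw [hDj]
        apply HasDerivAt.fun_sum
        intro i _
        have h1 : HasDerivAt (d i) (deriv (d i) y) y :=
          ((hsm i).differentiable (by norm_num) y).hasDerivAt
        have h2 : HasDerivAt ((Dop σ)^[i] f) ((Dop σ)^[i + 1] f y * Wt σ y) y := by
          rw [← deriv_iter σ hσ i hf y]
          exact ((iter_smooth σ hσ i hf).differentiable (by norm_num) y).hasDerivAt
        exact h1.mul h2
      rw [iteratedDeriv_succ, hder.deriv]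
      have e1 : ∑ i ∈ Finset.range (j + 2),
          (deriv (d i) y + (if i = 0 then 0 else d (i - 1) y * Wt σ y)) * (Dop σ)^[i] f y
          = ∑ i ∈ Finset.range (j + 2), deriv (d i) y * (Dop σ)^[i] f y
            + ∑ i ∈ Finset.range (j + 2),
                (if i = 0 then 0 else d (i - 1) y * Wt σ y) * (Dop σ)^[i] f y := by
        rw [← Finset.sum_add_distrib]
        congr 1; funext i; ring
      rw [e1]
      have e2 : ∑ i ∈ Finset.range (j + 2), deriv (d i) y * (Dop σ)^[i] f y
          = ∑ i ∈ Finset.range (j + 1), deriv (d i) y * (Dop σ)^[i] f y := by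
        rw [Finset.sum_range_succ]
        have : d (j + 1) = fun _ => 0 := hvan (j + 1) (by omega)
        simp [this]
      have e3 : ∑ i ∈ Finset.range (j + 2),
          (if i = 0 then 0 else d (i - 1) y * Wt σ y) * (Dop σ)^[i] f y
          = ∑ i ∈ Finset.range (j + 1), d i y * ((Dop σ)^[i + 1] f y * Wt σ y) := by
        rw [Finset.sum_range_succ']
        simp [mul_comm, mul_assoc, mul_left_comm]
      rw [e2, e3, ← Finset.sum_add_distrib]

lemma sqrt_add_le {a b : ℝ} (ha : 0 ≤ a) (hb : 0 ≤ b) :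
    Real.sqrt (a + b) ≤ Real.sqrt a + Real.sqrt b := by
  have h : a + b ≤ (Real.sqrt a + Real.sqrt b) ^ 2 := by
    have := Real.sqrt_nonneg a
    have := Real.sqrt_nonneg b
    have ha2 := Real.sq_sqrt ha
    have hb2 := Real.sq_sqrt hb
    nlinarith [mul_nonneg (Real.sqrt_nonneg a) (Real.sqrt_nonneg b)]
  calc Real.sqrt (a + b) ≤ Real.sqrt ((Real.sqrt a + Real.sqrt b) ^ 2) :=
        Real.sqrt_le_sqrt h
    _ = Real.sqrt a + Real.sqrt b := Real.sqrt_sq (by positivity)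

lemma sqrt_sum_le {ι : Type*} (s : Finset ι) (b : ι → ℝ) (hb : ∀ i ∈ s, 0 ≤ b i) :
    Real.sqrt (∑ i ∈ s, b i) ≤ ∑ i ∈ s, Real.sqrt (b i) := by
  induction s using Finset.cons_induction with
  | empty => simp
  | cons a s ha ih =>
    rw [Finset.sum_cons, Finset.sum_cons]
    have hbs : 0 ≤ ∑ i ∈ s, b i :=
      Finset.sum_nonneg fun i hi => hb i (Finset.mem_cons_of_mem hi)
    calc Real.sqrt (b a + ∑ i ∈ s, b i) ≤ Real.sqrt (b a) + Real.sqrt (∑ i ∈ s, b i) :=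
          sqrt_add_le (hb a (Finset.mem_cons_self a s)) hbs
      _ ≤ Real.sqrt (b a) + ∑ i ∈ s, Real.sqrt (b i) := by
          gcongr
          exact ih fun i hi => hb i (Finset.mem_cons_of_mem hi)

lemma cont_integrableOn {f : ℝ → ℝ} (hf : Continuous f) (a b : ℝ) :
    IntegrableOn f (Set.Ioo a b) :=
  (hf.integrableOn_Icc).mono_set Set.Ioo_subset_Icc_self

lemma my_sq_sum_le_card_mul_sum_sq {ι : Type*} (s : Finset ι) (f : ι → ℝ) :
    (∑ i ∈ s, f i) ^ 2 ≤ (s.card : ℝ) * ∑ i ∈ s, f i ^ 2 := by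
  have := Finset.sum_mul_sq_le_sq_mul_sq s f (fun _ => 1)
  simp only [mul_one, one_pow] at this
  calc (∑ i ∈ s, f i) ^ 2 ≤ (∑ i ∈ s, f i ^ 2) * ∑ i ∈ s, (1:ℝ) := this
    _ = (s.card : ℝ) * ∑ i ∈ s, f i ^ 2 := by
        simp [mul_comm]

theorem halfwave_norm_equivalence (R : ℝ) (hR : 0 < R) (k : ℕ)
    (σ : ℝ) (hσ : σ = 1 ∨ σ = -1) :
    ∃ c > (0 : ℝ), ∃ C > (0 : ℝ), ∀ f : ℝ → ℝ, ContDiff ℝ (⊤ : ℕ∞) f →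
      c * sob1 R k f ≤ ∑ j ∈ Finset.range (k + 1), wL2 R σ ((Dop σ)^[j] f) ∧
      ∑ j ∈ Finset.range (k + 1), wL2 R σ ((Dop σ)^[j] f) ≤ C * sob1 R k f := by
  -- minimum of the weight on [-R, R]
  obtain ⟨y₀, hy₀, hy₀min⟩ := isCompact_Icc.exists_isMinOn (s := Set.Icc (-R) R)
    ⟨-R, by constructor <;> linarith⟩ ((contDiff_Wt σ).continuous.continuousOn)
  set m := Wt σ y₀ with hm
  have hm_pos : 0 < m := Wt_pos σ hσ y₀
  have hm_le : ∀ y ∈ Set.Icc (-R) R, m ≤ Wt σ y := fun y hy => hy₀min hy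
  -- coefficient families
  choose c hcsm hcvan hcrep using fun j => repA σ hσ j
  choose d hdsm hdvan hdrep using fun j => repB σ hσ j
  -- uniform bound B0 on the squares of all relevant coefficients
  set F : ℝ → ℝ := fun y => ∑ j ∈ Finset.range (k + 1), ∑ i ∈ Finset.range (k + 1),
    ((c j i y) ^ 2 + (d j i y) ^ 2) with hF
  have hFcont : Continuous F := by
    apply continuous_finset_sum
    intro j _
    apply continuous_finset_sum
    intro i _
    exact (((hcsm j i).continuous.pow 2).add ((hdsm j i).continuous.pow 2))
  obtain ⟨B0, hB0⟩ := (isCompact_Icc (a := -R) (b := R)).exists_bound_of_continuousOn hFcont.continuousOn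
  have hB0nn : 0 ≤ B0 :=
    le_trans (norm_nonneg _) (hB0 (-R) ⟨le_refl _, by linarith⟩)
  have hterm_le : ∀ j ∈ Finset.range (k + 1), ∀ i ∈ Finset.range (k + 1),
      ∀ y ∈ Set.Icc (-R) R, (c j i y) ^ 2 + (d j i y) ^ 2 ≤ B0 := by
    intro j hj i hi y hy
    have h1 : (c j i y) ^ 2 + (d j i y) ^ 2
        ≤ ∑ i ∈ Finset.range (k + 1), ((c j i y) ^ 2 + (d j i y) ^ 2) :=
      Finset.single_le_sum (f := fun i => (c j i y) ^ 2 + (d j i y) ^ 2)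
        (fun i _ => by positivity) hi
    have h2 : ∑ i ∈ Finset.range (k + 1), ((c j i y) ^ 2 + (d j i y) ^ 2) ≤ F y :=
      Finset.single_le_sum (f := fun j => ∑ i ∈ Finset.range (k + 1),
        ((c j i y) ^ 2 + (d j i y) ^ 2)) (fun j _ => Finset.sum_nonneg fun i _ => by positivity) hj
    have h3 : F y ≤ B0 := le_trans (le_abs_self _) (hB0 y hy)
    linarith
  have hcB : ∀ j ∈ Finset.range (k + 1), ∀ i ∈ Finset.range (k + 1),
      ∀ y ∈ Set.Icc (-R) R, (c j i y) ^ 2 ≤ B0 := by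
    intro j hj i hi y hy
    have := hterm_le j hj i hi y hy
    nlinarith [sq_nonneg (d j i y)]
  have hdB : ∀ j ∈ Finset.range (k + 1), ∀ i ∈ Finset.range (k + 1),
      ∀ y ∈ Set.Icc (-R) R, (d j i y) ^ 2 ≤ B0 := by
    intro j hj i hi y hy
    have := hterm_le j hj i hi y hy
    nlinarith [sq_nonneg (c j i y)]
  set M₁ := 2 * ((k : ℝ) + 1) * B0 with hM₁
  set M₂ := ((k : ℝ) + 1) * B0 / m with hM₂
  have hM₁nn : 0 ≤ M₁ := by positivity
  have hM₂nn : 0 ≤ M₂ := by positivity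
  refine ⟨(((k : ℝ) + 1) * Real.sqrt M₂ + 1)⁻¹, by positivity,
    ((k : ℝ) + 1) * Real.sqrt M₁ + 1, by positivity, ?_⟩
  intro f hf
  have hDcont : ∀ i, Continuous ((Dop σ)^[i] f) := fun i => (iter_smooth σ hσ i hf).continuous
  have hfic : ∀ i, Continuous (iteratedDeriv i f) := fun i => (smooth_iteratedDeriv i hf).continuous
  have hWc : Continuous (Wt σ) := (contDiff_Wt σ).continuous
  set I : ℕ → ℝ := fun i => ∫ x in Set.Ioo (-R) R, (iteratedDeriv i f x) ^ 2 with hI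
  set J : ℕ → ℝ := fun i => ∫ y in Set.Ioo (-R) R, ((Dop σ)^[i] f y) ^ 2 * Wt σ y with hJ
  have hwL2 : ∀ i, wL2 R σ ((Dop σ)^[i] f) = Real.sqrt (J i) := fun i => rfl
  have hsob : sob1 R k f = ∑ j ∈ Finset.range (k + 1), Real.sqrt (I j) := rfl
  have hIint : ∀ i, IntegrableOn (fun x => (iteratedDeriv i f x) ^ 2) (Set.Ioo (-R) R) :=
    fun i => cont_integrableOn ((hfic i).pow 2) _ _
  have hJint : ∀ i, IntegrableOn (fun y => ((Dop σ)^[i] f y) ^ 2 * Wt σ y) (Set.Ioo (-R) R) :=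
    fun i => cont_integrableOn (((hDcont i).pow 2).mul hWc) _ _
  have hInn : ∀ i, 0 ≤ I i :=
    fun i => setIntegral_nonneg measurableSet_Ioo (fun x _ => sq_nonneg _)
  have hJnn : ∀ i, 0 ≤ J i := fun i => setIntegral_nonneg measurableSet_Ioo
    (fun y _ => mul_nonneg (sq_nonneg _) (Wt_pos σ hσ y).le)
  have hsobnn : 0 ≤ sob1 R k f := by
    rw [hsob]; exact Finset.sum_nonneg fun j _ => Real.sqrt_nonneg _
  have hSnn : 0 ≤ ∑ i ∈ Finset.range (k + 1), Real.sqrt (J i) :=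
    Finset.sum_nonneg fun i _ => Real.sqrt_nonneg _
  -- UPPER BOUND
  have key1 : ∀ j ∈ Finset.range (k + 1),
      J j ≤ M₁ * ∑ i ∈ Finset.range (k + 1), I i := by
    intro j hj
    have hjk : j + 1 ≤ k + 1 := Finset.mem_range.1 hj
    have step : J j ≤ ∫ y in Set.Ioo (-R) R,
        M₁ * ∑ i ∈ Finset.range (k + 1), (iteratedDeriv i f y) ^ 2 := by
      apply setIntegral_mono_on (hJint j)
        (cont_integrableOn (continuous_const.mul
          (continuous_finset_sum _ fun i _ => (hfic i).pow 2)) _ _)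
        measurableSet_Ioo
      intro y hy
      have hyI : y ∈ Set.Icc (-R) R := Set.Ioo_subset_Icc_self hy
      have hrep := hcrep j f hf y
      have h2 : ((Dop σ)^[j] f y) ^ 2
          ≤ ((j : ℝ) + 1) * ∑ i ∈ Finset.range (j + 1),
              (c j i y * iteratedDeriv i f y) ^ 2 := by
        rw [hrep]
        have := my_sq_sum_le_card_mul_sum_sq (Finset.range (j + 1))
          (fun i => c j i y * iteratedDeriv i f y)
        simpa using this
      have h3 : ∑ i ∈ Finset.range (j + 1), (c j i y * iteratedDeriv i f y) ^ 2
          ≤ ∑ i ∈ Finset.range (k + 1), B0 * (iteratedDeriv i f y) ^ 2 := by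
        have h3a : ∑ i ∈ Finset.range (j + 1), (c j i y * iteratedDeriv i f y) ^ 2
            ≤ ∑ i ∈ Finset.range (j + 1), B0 * (iteratedDeriv i f y) ^ 2 := by
          apply Finset.sum_le_sum
          intro i hi
          have hik : i ∈ Finset.range (k + 1) :=
            Finset.mem_range.2 (lt_of_lt_of_le (Finset.mem_range.1 hi) hjk)
          rw [mul_pow]
          exact mul_le_mul_of_nonneg_right (hcB j hj i hik y hyI) (sq_nonneg _)
        refine le_trans h3a (Finset.sum_le_sum_of_subset_of_nonneg ?_ ?_)
        · exact Finset.range_subset_range.2 hjk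
        · intro i _ _; positivity
      have hS1nn : 0 ≤ ∑ i ∈ Finset.range (j + 1),
          (c j i y * iteratedDeriv i f y) ^ 2 :=
        Finset.sum_nonneg fun i _ => sq_nonneg _
      have hjk' : ((j : ℝ) + 1) ≤ ((k : ℝ) + 1) := by exact_mod_cast hjk
      have h4 : ((Dop σ)^[j] f y) ^ 2
          ≤ ((k : ℝ) + 1) * ∑ i ∈ Finset.range (k + 1), B0 * (iteratedDeriv i f y) ^ 2 := by
        calc ((Dop σ)^[j] f y) ^ 2 ≤ ((j : ℝ) + 1) * ∑ i ∈ Finset.range (j + 1),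
              (c j i y * iteratedDeriv i f y) ^ 2 := h2
          _ ≤ ((k : ℝ) + 1) * ∑ i ∈ Finset.range (k + 1),
              B0 * (iteratedDeriv i f y) ^ 2 :=
            mul_le_mul hjk' h3 hS1nn (by positivity)
      have h5 : ((Dop σ)^[j] f y) ^ 2 * Wt σ y ≤ ((Dop σ)^[j] f y) ^ 2 * 2 :=
        mul_le_mul_of_nonneg_left (Wt_le_two σ hσ y) (sq_nonneg _)
      calc ((Dop σ)^[j] f y) ^ 2 * Wt σ y ≤ ((Dop σ)^[j] f y) ^ 2 * 2 := h5
        _ ≤ (((k : ℝ) + 1) * ∑ i ∈ Finset.range (k + 1),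
              B0 * (iteratedDeriv i f y) ^ 2) * 2 :=
          mul_le_mul_of_nonneg_right h4 (by norm_num)
        _ = M₁ * ∑ i ∈ Finset.range (k + 1), (iteratedDeriv i f y) ^ 2 := by
          rw [hM₁, ← Finset.mul_sum]; ring
    calc J j ≤ ∫ y in Set.Ioo (-R) R,
        M₁ * ∑ i ∈ Finset.range (k + 1), (iteratedDeriv i f y) ^ 2 := step
      _ = M₁ * ∑ i ∈ Finset.range (k + 1), I i := by
        rw [integral_const_mul]
        congr 1
        exact integral_finset_sum _ fun i _ => hIint i
  have upper : ∑ j ∈ Finset.range (k + 1), wL2 R σ ((Dop σ)^[j] f)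
      ≤ (((k : ℝ) + 1) * Real.sqrt M₁ + 1) * sob1 R k f := by
    have hterm : ∀ j ∈ Finset.range (k + 1),
        wL2 R σ ((Dop σ)^[j] f) ≤ Real.sqrt M₁ * sob1 R k f := by
      intro j hj
      rw [hwL2]
      calc Real.sqrt (J j) ≤ Real.sqrt (M₁ * ∑ i ∈ Finset.range (k + 1), I i) :=
            Real.sqrt_le_sqrt (key1 j hj)
        _ = Real.sqrt M₁ * Real.sqrt (∑ i ∈ Finset.range (k + 1), I i) :=
            Real.sqrt_mul hM₁nn _
        _ ≤ Real.sqrt M₁ * ∑ i ∈ Finset.range (k + 1), Real.sqrt (I i) :=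
            mul_le_mul_of_nonneg_left
              (sqrt_sum_le _ _ fun i _ => hInn i) (Real.sqrt_nonneg _)
        _ = Real.sqrt M₁ * sob1 R k f := by rw [hsob]
    calc ∑ j ∈ Finset.range (k + 1), wL2 R σ ((Dop σ)^[j] f)
        ≤ ∑ _j ∈ Finset.range (k + 1), Real.sqrt M₁ * sob1 R k f :=
          Finset.sum_le_sum hterm
      _ = ((k : ℝ) + 1) * (Real.sqrt M₁ * sob1 R k f) := by
          rw [Finset.sum_const, Finset.card_range]; push_cast; ring
      _ ≤ (((k : ℝ) + 1) * Real.sqrt M₁ + 1) * sob1 R k f := by nlinarith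
  -- LOWER BOUND
  have key2 : ∀ j ∈ Finset.range (k + 1),
      I j ≤ M₂ * ∑ i ∈ Finset.range (k + 1), J i := by
    intro j hj
    have hjk : j + 1 ≤ k + 1 := Finset.mem_range.1 hj
    have step : I j ≤ ∫ y in Set.Ioo (-R) R,
        M₂ * ∑ i ∈ Finset.range (k + 1), ((Dop σ)^[i] f y) ^ 2 * Wt σ y := by
      apply setIntegral_mono_on (hIint j)
        (cont_integrableOn (continuous_const.mul
          (continuous_finset_sum _ fun i _ => ((hDcont i).pow 2).mul hWc)) _ _)
        measurableSet_Ioo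
      intro y hy
      have hyI : y ∈ Set.Icc (-R) R := Set.Ioo_subset_Icc_self hy
      have hrep := hdrep j f hf y
      have h2 : (iteratedDeriv j f y) ^ 2
          ≤ ((j : ℝ) + 1) * ∑ i ∈ Finset.range (j + 1),
              (d j i y * (Dop σ)^[i] f y) ^ 2 := by
        rw [hrep]
        have := my_sq_sum_le_card_mul_sum_sq (Finset.range (j + 1))
          (fun i => d j i y * (Dop σ)^[i] f y)
        simpa using this
      have h3 : ∑ i ∈ Finset.range (j + 1), (d j i y * (Dop σ)^[i] f y) ^ 2
          ≤ ∑ i ∈ Finset.range (k + 1), (B0 / m) * (((Dop σ)^[i] f y) ^ 2 * Wt σ y) := by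
        have h3a : ∑ i ∈ Finset.range (j + 1), (d j i y * (Dop σ)^[i] f y) ^ 2
            ≤ ∑ i ∈ Finset.range (j + 1), (B0 / m) * (((Dop σ)^[i] f y) ^ 2 * Wt σ y) := by
          apply Finset.sum_le_sum
          intro i hi
          have hik : i ∈ Finset.range (k + 1) :=
            Finset.mem_range.2 (lt_of_lt_of_le (Finset.mem_range.1 hi) hjk)
          have hd : (d j i y) ^ 2 ≤ B0 := hdB j hj i hik y hyI
          have hWm : m ≤ Wt σ y := hm_le y hyI
          rw [mul_pow]
          rw [div_mul_eq_mul_div, le_div_iff₀ hm_pos]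
          calc (d j i y) ^ 2 * ((Dop σ)^[i] f y) ^ 2 * m
              ≤ B0 * ((Dop σ)^[i] f y) ^ 2 * Wt σ y := by
                apply mul_le_mul
                · exact mul_le_mul_of_nonneg_right hd (sq_nonneg _)
                · exact hWm
                · exact hm_pos.le
                · positivity
            _ = B0 * (((Dop σ)^[i] f y) ^ 2 * Wt σ y) := by ring
          
        refine le_trans h3a (Finset.sum_le_sum_of_subset_of_nonneg ?_ ?_)
        · exact Finset.range_subset_range.2 hjk
        · intro i _ _
          exact mul_nonneg (by positivity) (mul_nonneg (sq_nonneg _) (Wt_pos σ hσ y).le)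
      have hS1nn : 0 ≤ ∑ i ∈ Finset.range (j + 1), (d j i y * (Dop σ)^[i] f y) ^ 2 :=
        Finset.sum_nonneg fun i _ => sq_nonneg _
      have hjk' : ((j : ℝ) + 1) ≤ ((k : ℝ) + 1) := by exact_mod_cast hjk
      have hS2nn : 0 ≤ ∑ i ∈ Finset.range (k + 1),
          (B0 / m) * (((Dop σ)^[i] f y) ^ 2 * Wt σ y) :=
        Finset.sum_nonneg fun i _ =>
          mul_nonneg (by positivity) (mul_nonneg (sq_nonneg _) (Wt_pos σ hσ y).le)
      calc (iteratedDeriv j f y) ^ 2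
          ≤ ((j : ℝ) + 1) * ∑ i ∈ Finset.range (j + 1),
              (d j i y * (Dop σ)^[i] f y) ^ 2 := h2
        _ ≤ ((k : ℝ) + 1) * ∑ i ∈ Finset.range (k + 1),
              (B0 / m) * (((Dop σ)^[i] f y) ^ 2 * Wt σ y) :=
            mul_le_mul hjk' h3 hS1nn (by positivity)
        _ = M₂ * ∑ i ∈ Finset.range (k + 1), ((Dop σ)^[i] f y) ^ 2 * Wt σ y := by
            rw [hM₂, ← Finset.mul_sum]; ring
    calc I j ≤ ∫ y in Set.Ioo (-R) R,
        M₂ * ∑ i ∈ Finset.range (k + 1), ((Dop σ)^[i] f y) ^ 2 * Wt σ y := step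
      _ = M₂ * ∑ i ∈ Finset.range (k + 1), J i := by
        rw [integral_const_mul]
        congr 1
        exact integral_finset_sum _ fun i _ => hJint i
  have lower : sob1 R k f ≤ (((k : ℝ) + 1) * Real.sqrt M₂ + 1)
      * ∑ j ∈ Finset.range (k + 1), wL2 R σ ((Dop σ)^[j] f) := by
    have hterm : ∀ j ∈ Finset.range (k + 1),
        Real.sqrt (I j) ≤ Real.sqrt M₂ * ∑ i ∈ Finset.range (k + 1), Real.sqrt (J i) := by
      intro j hj
      calc Real.sqrt (I j) ≤ Real.sqrt (M₂ * ∑ i ∈ Finset.range (k + 1), J i) :=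
            Real.sqrt_le_sqrt (key2 j hj)
        _ = Real.sqrt M₂ * Real.sqrt (∑ i ∈ Finset.range (k + 1), J i) :=
            Real.sqrt_mul hM₂nn _
        _ ≤ Real.sqrt M₂ * ∑ i ∈ Finset.range (k + 1), Real.sqrt (J i) :=
            mul_le_mul_of_nonneg_left
              (sqrt_sum_le _ _ fun i _ => hJnn i) (Real.sqrt_nonneg _)
    have hsum : sob1 R k f
        ≤ ((k : ℝ) + 1) * (Real.sqrt M₂ * ∑ i ∈ Finset.range (k + 1), Real.sqrt (J i)) := by
      rw [hsob]
      calc ∑ j ∈ Finset.range (k + 1), Real.sqrt (I j)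
          ≤ ∑ _j ∈ Finset.range (k + 1),
              Real.sqrt M₂ * ∑ i ∈ Finset.range (k + 1), Real.sqrt (J i) :=
            Finset.sum_le_sum hterm
        _ = ((k : ℝ) + 1) * (Real.sqrt M₂ * ∑ i ∈ Finset.range (k + 1), Real.sqrt (J i)) := by
            rw [Finset.sum_const, Finset.card_range]; push_cast; ring
    have : ∑ j ∈ Finset.range (k + 1), wL2 R σ ((Dop σ)^[j] f)
        = ∑ i ∈ Finset.range (k + 1), Real.sqrt (J i) := by
      exact Finset.sum_congr rfl fun i _ => hwL2 i
    rw [this]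
    nlinarith [Real.sqrt_nonneg M₂]
  constructor
  · have hA : (0 : ℝ) < ((k : ℝ) + 1) * Real.sqrt M₂ + 1 := by positivity
    rw [inv_mul_le_iff₀ hA]
    exact lower
  · exact upper
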